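/- Let s, u, v be points forming a triangle with interior angle 3π/10 at s, 3π/10 at v, and 2π/5 at u. Let t be a point on segment uv such that the angle ∠vst ≤ π/10, and let w be a point in the closed triangle △stu. Then for every K ≥ sin(3π/10)/(sin(2π/5) − sin(3π/10)), we have |sw| + K·|wt| ≤ K·|st|. -/

import Mathlib

open Real EuclideanGeometry

private lemma trig_key (α : ℝ) (h0 : 0 ≤ α) (h1 : α ≤ 3 * π / 10) :
    Real.sin (α + 2 * π / 5) * (Real.sin (2 * π / 5) - Real.sin (3 * π / 10)) ≤
      Real.sin (3 * π / 10) * (Real.sin (2 * π / 5) - Real.sin α) := by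
  have hπ := Real.pi_pos
  set c : ℝ := α / 2 + π / 5 with hc
  have e1 : Real.sin (α + 2 * π / 5) = 2 * Real.sin c * Real.cos c := by
    rw [show α + 2 * π / 5 = 2 * c by rw [hc]; ring, Real.sin_two_mul]
  have e2 : Real.sin (2 * π / 5) - Real.sin α
      = 2 * Real.sin (π / 5 - α / 2) * Real.cos c := by
    rw [Real.sin_sub_sin, show (2 * π / 5 - α) / 2 = π / 5 - α / 2 by ring,
      show (2 * π / 5 + α) / 2 = c by rw [hc]; ring]
  have e3 : Real.sin (2 * π / 5) - Real.sin (3 * π / 10)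
      = 2 * Real.sin (π / 20) * Real.cos (7 * π / 20) := by
    rw [Real.sin_sub_sin, show (2 * π / 5 - 3 * π / 10) / 2 = π / 20 by ring,
      show (2 * π / 5 + 3 * π / 10) / 2 = 7 * π / 20 by ring]
  have e4 : Real.sin (3 * π / 10)
      = 2 * Real.sin (7 * π / 20) * Real.cos (7 * π / 20) := by
    rw [show (3 : ℝ) * π / 10 = π - 2 * (7 * π / 20) by ring, Real.sin_pi_sub,
      Real.sin_two_mul]
  have hcosc : 0 ≤ Real.cos c :=
    Real.cos_nonneg_of_mem_Icc ⟨by rw [hc]; linarith, by rw [hc]; linarith⟩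
  have hcos7 : 0 ≤ Real.cos (7 * π / 20) :=
    Real.cos_nonneg_of_mem_Icc ⟨by linarith, by linarith⟩
  -- key: sin c * sin (π/20) ≤ sin (7π/20) * sin (π/5 - α/2)
  have key : Real.sin c * Real.sin (π / 20)
      ≤ Real.sin (7 * π / 20) * Real.sin (π / 5 - α / 2) := by
    have i1 : Real.cos (c - π / 20) - Real.cos (c + π / 20)
        = 2 * Real.sin c * Real.sin (π / 20) := by
      rw [Real.cos_sub_cos]
      rw [show (c - π / 20 + (c + π / 20)) / 2 = c by ring,
        show (c - π / 20 - (c + π / 20)) / 2 = -(π / 20) by ring, Real.sin_neg]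
      ring
    have i2 : Real.cos (c - π / 20) - Real.cos (3 * π / 4 - c)
        = 2 * Real.sin (7 * π / 20) * Real.sin (π / 5 - α / 2) := by
      rw [Real.cos_sub_cos]
      rw [show (c - π / 20 + (3 * π / 4 - c)) / 2 = 7 * π / 20 by ring,
        show (c - π / 20 - (3 * π / 4 - c)) / 2 = -(π / 5 - α / 2) by rw [hc]; ring,
        Real.sin_neg]
      ring
    have hmono : Real.cos (3 * π / 4 - c) ≤ Real.cos (c + π / 20) := by
      apply Real.cos_le_cos_of_nonneg_of_le_pi
      · rw [hc]; linarith
      · rw [hc]; linarith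
      · rw [hc]; linarith
    linarith
  calc Real.sin (α + 2 * π / 5) * (Real.sin (2 * π / 5) - Real.sin (3 * π / 10))
      = 4 * Real.cos c * Real.cos (7 * π / 20) * (Real.sin c * Real.sin (π / 20)) := by
        rw [e1, e3]; ring
    _ ≤ 4 * Real.cos c * Real.cos (7 * π / 20)
        * (Real.sin (7 * π / 20) * Real.sin (π / 5 - α / 2)) := by
        apply mul_le_mul_of_nonneg_left key (by positivity)
    _ = Real.sin (3 * π / 10) * (Real.sin (2 * π / 5) - Real.sin α) := by
        rw [e4, e2]; ring

private lemma lawsin (a b c : EuclideanSpace ℝ (Fin 2)) :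
    Real.sin (∠ b a c) * (dist a b * dist a c)
      = Real.sin (∠ a b c) * (dist b a * dist b c) := by
  have hab : dist a b = ‖b -ᵥ a‖ := by rw [dist_comm, dist_eq_norm_vsub (EuclideanSpace ℝ (Fin 2))]
  have hac : dist a c = ‖c -ᵥ a‖ := by rw [dist_comm, dist_eq_norm_vsub (EuclideanSpace ℝ (Fin 2))]
  have hba : dist b a = ‖b -ᵥ a‖ := dist_eq_norm_vsub (EuclideanSpace ℝ (Fin 2)) b a
  have hbc : dist b c = ‖(c -ᵥ a) - (b -ᵥ a)‖ := by
    rw [vsub_sub_vsub_cancel_right, dist_comm, dist_eq_norm_vsub (EuclideanSpace ℝ (Fin 2))]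
  have hang1 : ∠ b a c = InnerProductGeometry.angle (b -ᵥ a) (c -ᵥ a) := rfl
  have hang2 : ∠ a b c = InnerProductGeometry.angle (-(b -ᵥ a)) ((c -ᵥ a) - (b -ᵥ a)) := by
    rw [EuclideanGeometry.angle, neg_vsub_eq_vsub_rev, vsub_sub_vsub_cancel_right]
  rw [hab, hac, hba, hbc, hang1, hang2, InnerProductGeometry.angle_neg_left, Real.sin_pi_sub]
  set x := b -ᵥ a
  set y := c -ᵥ a
  rw [InnerProductGeometry.sin_angle_mul_norm_mul_norm,
    InnerProductGeometry.sin_angle_mul_norm_mul_norm]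
  congr 1
  simp only [inner_sub_left, inner_sub_right, real_inner_comm x y]
  ring

theorem lemma_t334 (s u v t w : EuclideanSpace ℝ (Fin 2))
    (hs : ∠ v s u = 3 * π / 10) (hv : ∠ s v u = 3 * π / 10) (hu : ∠ s u v = 2 * π / 5)
    (ht : t ∈ segment ℝ u v) (hangle : ∠ v s t ≤ π / 10)
    (hw : w ∈ convexHull ℝ ({s, t, u} : Set (EuclideanSpace ℝ (Fin 2))))
    (K : ℝ) (hK : Real.sin (3 * π / 10) / (Real.sin (2 * π / 5) - Real.sin (3 * π / 10)) ≤ K) :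
    dist s w + K * dist w t ≤ K * dist s t := by
  have hπ := Real.pi_pos
  -- nondegeneracy
  have hvs : v ≠ s := by rintro rfl; rw [angle_self_left] at hs; linarith
  have hus : u ≠ s := by rintro rfl; rw [angle_self_right] at hs; linarith
  have hts : t ≠ s := by rintro rfl; rw [angle_self_right] at hangle; linarith
  have htu : t ≠ u := by rintro rfl; rw [hs] at hangle; linarith
  -- positivity facts about K
  have hdenom : 0 < Real.sin (2 * π / 5) - Real.sin (3 * π / 10) := by
    have := Real.sin_lt_sin_of_lt_of_le_pi_div_two (x := 3 * π / 10) (y := 2 * π / 5)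
      (by linarith) (by linarith) (by linarith)
    linarith
  have hhalf : (1 : ℝ) / 2 < Real.sin (3 * π / 10) := by
    have := Real.sin_lt_sin_of_lt_of_le_pi_div_two (x := π / 6) (y := 3 * π / 10)
      (by linarith) (by linarith) (by linarith)
    rw [Real.sin_pi_div_six] at this
    linarith
  have hK1 : (1 : ℝ) ≤ K := by
    refine le_trans ((one_le_div hdenom).mpr ?_) hK
    have := Real.sin_le_one (2 * π / 5)
    linarith
  have hK0 : (0 : ℝ) ≤ K := by linarith
  -- key facts about angles of triangle s t u
  have hB : ∠ s u t = 2 * π / 5 ∧ 3 * π / 10 ≤ ∠ s t u := by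
    by_cases htv : t = v
    · subst htv
      exact ⟨hu, le_of_eq hv.symm⟩
    · have hsbtw : Sbtw ℝ u t v := ⟨mem_segment_iff_wbtw.mp ht, htu, htv⟩
      have hπ1 : ∠ u t v = π := hsbtw.angle₁₂₃_eq_pi
      refine ⟨by rw [angle_eq_angle_of_angle_eq_pi s hπ1]; exact hu, ?_⟩
      have hv' : ∠ s v t = 3 * π / 10 := by
        rw [angle_eq_angle_of_angle_eq_pi s hsbtw.angle₃₂₁_eq_pi]; exact hv
      have hsplit : ∠ s t u + ∠ s t v = π := angle_add_angle_eq_pi_of_angle_eq_pi s hπ1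
      have hsum2 : ∠ s t v + ∠ t v s + ∠ v s t = π :=
        angle_add_angle_add_angle_eq_pi v hts
      have h0 : 0 ≤ ∠ v s t := angle_nonneg _ _ _
      rw [angle_comm t v s, hv'] at hsum2
      linarith
  obtain ⟨hB, hC3⟩ := hB
  have hsum : ∠ s t u + ∠ t u s + ∠ u s t = π :=
    angle_add_angle_add_angle_eq_pi u hts
  rw [angle_comm t u s, hB] at hsum
  have hA0 : 0 ≤ ∠ u s t := angle_nonneg _ _ _
  have hA : ∠ u s t ≤ 3 * π / 10 := by linarith
  have hCeq : Real.sin (∠ s t u) = Real.sin (∠ u s t + 2 * π / 5) := by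
    rw [show ∠ s t u = π - (∠ u s t + 2 * π / 5) by linarith, Real.sin_pi_sub]
  -- trig bound
  have hsinA : Real.sin (∠ u s t) ≤ Real.sin (3 * π / 10) := by
    rcases eq_or_lt_of_le hA with h | h
    · rw [h]
    · exact (Real.sin_lt_sin_of_lt_of_le_pi_div_two (by linarith) (by linarith) h).le
  have key : Real.sin (∠ u s t + 2 * π / 5)
      ≤ K * (Real.sin (2 * π / 5) - Real.sin (∠ u s t)) := by
    have h1 := trig_key (∠ u s t) hA0 hA
    have h2 : Real.sin (∠ u s t + 2 * π / 5)
        ≤ Real.sin (3 * π / 10) / (Real.sin (2 * π / 5) - Real.sin (3 * π / 10))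
          * (Real.sin (2 * π / 5) - Real.sin (∠ u s t)) := by
      rw [div_mul_eq_mul_div, le_div_iff₀ hdenom]
      linarith
    refine h2.trans ?_
    apply mul_le_mul_of_nonneg_right hK
    linarith
  -- law of sines relations
  have hdus : dist u s ≠ 0 := dist_ne_zero.mpr hus
  have hdut : dist u t ≠ 0 := dist_ne_zero.mpr (Ne.symm htu)
  have e1 : Real.sin (∠ u s t) * dist s t = Real.sin (∠ s u t) * dist u t := by
    have h := lawsin s u t
    rw [dist_comm s u] at h
    exact mul_left_cancel₀ hdus (by linear_combination h)
  have e2 : Real.sin (∠ s t u) * dist t s = Real.sin (∠ s u t) * dist u s := by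
    have h := lawsin t u s
    rw [dist_comm t u, angle_comm u t s, angle_comm t u s] at h
    exact mul_left_cancel₀ hdut (by linear_combination h)
  have hsinB : 0 < Real.sin (∠ s u t) := by
    rw [hB]; exact Real.sin_pos_of_pos_of_lt_pi (by linarith) (by linarith)
  -- the key vertex inequality at u
  have keyu : dist u s + K * dist u t ≤ K * dist s t := by
    have hmul : Real.sin (∠ s u t) * (dist u s + K * dist u t)
        ≤ Real.sin (∠ s u t) * (K * dist s t) := by
      have hst0 : 0 ≤ dist s t := dist_nonneg
      have hts' : dist t s = dist s t := dist_comm t s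
      have hchain : (Real.sin (∠ s t u) + K * Real.sin (∠ u s t)) * dist s t
          ≤ K * Real.sin (2 * π / 5) * dist s t := by
        apply mul_le_mul_of_nonneg_right _ hst0
        rw [hCeq]; linarith
      calc Real.sin (∠ s u t) * (dist u s + K * dist u t)
          = Real.sin (∠ s t u) * dist t s + K * (Real.sin (∠ u s t) * dist s t) := by
            linear_combination -e2 - K * e1
        _ = (Real.sin (∠ s t u) + K * Real.sin (∠ u s t)) * dist s t := by
            rw [hts']; ring
        _ ≤ K * Real.sin (2 * π / 5) * dist s t := hchain
        _ = Real.sin (∠ s u t) * (K * dist s t) := by rw [hB]; ring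
    exact le_of_mul_le_mul_left hmul hsinB
  -- convexity reduction to vertices
  have hconv : ConvexOn ℝ Set.univ
      (fun p : EuclideanSpace ℝ (Fin 2) => dist p s + K * dist p t) := by
    have h2 := (convexOn_univ_dist t).smul hK0
    exact (convexOn_univ_dist s).add (by simpa [smul_eq_mul] using h2)
  obtain ⟨y, hy, hle⟩ := hconv.exists_ge_of_mem_convexHull (Set.subset_univ _) hw
  have hwst : dist s w + K * dist w t = dist w s + K * dist w t := by rw [dist_comm]
  rw [hwst]
  refine le_trans hle ?_
  simp only [Set.mem_insert_iff, Set.mem_singleton_iff] at hy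
  rcases hy with h | h | h <;> rw [h]
  · simp
  · rw [dist_self, mul_zero, add_zero, dist_comm t s]
    nlinarith [dist_nonneg (x := s) (y := t)]
  · exact keyu
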